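/- arXiv:2011.13531 — 3 statements merged into one kernel-verified Lean document; each statement's English description precedes it below -/
import Mathlib

section
/- The relative category of a map of pairs is a homotopy invariant: if f, g : (B, C) → (X, A) are maps of pairs that are homotopic relative to C (i.e., there is a homotopy H : B × [0,1] → X with H(-,0) = f, H(-,1) = g, and H(C, t) ⊆ A for all t), then relcat(f) = relcat(g). -/
open Set unitInterval

namespace Paper

/-- An open subset `U ⊆ X` is relative categorical for the pair `(X, A)`:
there is a homotopy `H : U × [0,1] → X` with `H(-,1)` the inclusion and `H(U,0) ⊆ A`. -/
def RelCategorical (X : Type) [TopologicalSpace X] (A U : Set X) : Prop :=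
  ∃ H : C(U × I, X), (∀ u : U, H (u, 1) = u) ∧ (∀ u : U, H (u, 0) ∈ A)

/-- Relative category of a pair `(X, A)` (Definition 2.2). -/
noncomputable def relcatPair (X : Type) [TopologicalSpace X] (A : Set X) : ℕ∞ :=
  sInf ((fun k : ℕ => (k : ℕ∞)) ''
    {k : ℕ | ∃ U : Fin (k + 1) → Set X,
      (∀ i, IsOpen (U i)) ∧ (⋃ i, U i) = Set.univ ∧ ∀ i, RelCategorical X A (U i)})

/-- A restriction of a map of pairs `f : (B, C) → (X, A)` to `U ⊆ B` is
relatively inessential. -/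
def RelInessentialOn {B X : Type} [TopologicalSpace B] [TopologicalSpace X]
    (f : C(B, X)) (C : Set B) (A : Set X) (U : Set B) : Prop :=
  ∃ H : C(U × I, X), (∀ u : U, H (u, 1) = f u) ∧ (∀ u : U, H (u, 0) ∈ A) ∧
    ∀ u : U, (u : B) ∈ C → ∀ t : I, H (u, t) ∈ A

/-- Relative category of a map of pairs `f : (B, C) → (X, A)`. -/
noncomputable def relcatMap {B X : Type} [TopologicalSpace B] [TopologicalSpace X]
    (f : C(B, X)) (C : Set B) (A : Set X) : ℕ∞ :=
  sInf ((fun k : ℕ => (k : ℕ∞)) ''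
    {k : ℕ | ∃ U : Fin (k + 1) → Set B,
      (∀ i, IsOpen (U i)) ∧ (⋃ i, U i) = Set.univ ∧ ∀ i, RelInessentialOn f C A (U i)})

/-- `f` is null-homotopic on `U`. -/
def NullhomotopicOn {X Y : Type} [TopologicalSpace X] [TopologicalSpace Y]
    (f : C(X, Y)) (U : Set X) : Prop :=
  ∃ (y : Y) (H : C(U × I, Y)), (∀ u : U, H (u, 1) = f u) ∧ ∀ u : U, H (u, 0) = y

/-- Lusternik–Schnirelmann category of a map (normalized). -/
noncomputable def catMap {X Y : Type} [TopologicalSpace X] [TopologicalSpace Y]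
    (f : C(X, Y)) : ℕ∞ :=
  sInf ((fun k : ℕ => (k : ℕ∞)) ''
    {k : ℕ | ∃ U : Fin (k + 1) → Set X,
      (∀ i, IsOpen (U i)) ∧ (⋃ i, U i) = Set.univ ∧ ∀ i, NullhomotopicOn f (U i)})

/-- Normalized LS category of a space. -/
noncomputable def lsCat (X : Type) [TopologicalSpace X] : ℕ∞ :=
  catMap (ContinuousMap.id X)

/-- The thin diagonal in `X^n`. -/
def diagSet (n : ℕ) (X : Type) : Set (Fin n → X) := {x | ∀ i j, x i = x j}

/-- The `n`-fold power of a map. -/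
def powMap {X Y : Type} [TopologicalSpace X] [TopologicalSpace Y] (n : ℕ)
    (f : C(X, Y)) : C(Fin n → X, Fin n → Y) :=
  ⟨fun x i => f (x i), continuous_pi fun i => f.continuous.comp (continuous_apply i)⟩

/-- Higher topological complexity of a map `f : X → Y`:
`TCₙ(f) = relcat((fⁿ) : (Xⁿ, Δₙ X) → (Yⁿ, Δₙ Y))`. -/
noncomputable def higherTCmap {X Y : Type} [TopologicalSpace X] [TopologicalSpace Y]
    (n : ℕ) (f : C(X, Y)) : ℕ∞ :=
  relcatMap (powMap n f) (diagSet n X) (diagSet n Y)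


lemma relInessential_of_homotopy {B X : Type} [TopologicalSpace B] [TopologicalSpace X]
    (f g : C(B, X)) (C : Set B) (A : Set X)
    (H : C(B × I, X)) (H0 : ∀ b, H (b, 0) = f b) (H1 : ∀ b, H (b, 1) = g b)
    (HC : ∀ c ∈ C, ∀ t : I, H (c, t) ∈ A)
    (U : Set B) (hU : RelInessentialOn f C A U) : RelInessentialOn g C A U := by
  obtain ⟨K, K1, K0, KC⟩ := hU
  let incl : C(U, B) := ⟨Subtype.val, continuous_subtype_val⟩
  let F0 : C(U, X) := ⟨fun u => K (u, 0), K.continuous.comp (continuous_id.prodMk continuous_const)⟩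
  let h1 : ContinuousMap.Homotopy (f.comp incl) F0 :=
    { toFun := fun p => K (p.2, unitInterval.symm p.1)
      continuous_toFun := K.continuous.comp (continuous_snd.prodMk
        (unitInterval.continuous_symm.comp continuous_fst))
      map_zero_left := fun u => by simp only [unitInterval.symm_zero]; exact K1 u
      map_one_left := fun u => by simp [F0] }
  let hH : ContinuousMap.Homotopy (g.comp incl) (f.comp incl) :=
    { toFun := fun p => H ((p.2 : B), unitInterval.symm p.1)
      continuous_toFun := H.continuous.comp
        ((continuous_subtype_val.comp continuous_snd).prodMk
          (unitInterval.continuous_symm.comp continuous_fst))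
      map_zero_left := fun u => by simp only [unitInterval.symm_zero]; exact H1 u
      map_one_left := fun u => by simp only [unitInterval.symm_one]; exact H0 u }
  let h := hH.trans h1
  refine ⟨⟨fun p => h (unitInterval.symm p.2, p.1),
    h.continuous.comp ((unitInterval.continuous_symm.comp continuous_snd).prodMk
      continuous_fst)⟩, fun u => ?_, fun u => ?_, fun u hu t => ?_⟩
  · simp only [ContinuousMap.coe_mk]
    have : unitInterval.symm 1 = 0 := by simp
    rw [this, h.apply_zero]; rfl
  · simp only [ContinuousMap.coe_mk]
    have : unitInterval.symm 0 = 1 := by simp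
    rw [this, h.apply_one]
    exact K0 u
  · simp only [ContinuousMap.coe_mk]
    rw [ContinuousMap.Homotopy.trans_apply]
    split_ifs
    · exact HC u hu _
    · exact KC u hu _

/-- relcat of a map of pairs is invariant under homotopy rel `C`
(as maps of pairs into `(X, A)`). -/
theorem relcatMap_homotopy_invariant {B X : Type} [TopologicalSpace B] [TopologicalSpace X]
    (f g : C(B, X)) (C : Set B) (A : Set X)
    (hf : Set.MapsTo f C A) (hg : Set.MapsTo g C A)
    (H : C(B × I, X)) (H0 : ∀ b, H (b, 0) = f b) (H1 : ∀ b, H (b, 1) = g b)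
    (HC : ∀ c ∈ C, ∀ t : I, H (c, t) ∈ A) :
    relcatMap f C A = relcatMap g C A := by
  unfold relcatMap
  congr 1
  ext k
  simp only [Set.mem_image, Set.mem_setOf_eq]
  constructor
  · rintro ⟨m, ⟨U, hO, hcov, hin⟩, rfl⟩
    exact ⟨m, ⟨U, hO, hcov, fun i => relInessential_of_homotopy f g C A H H0 H1 HC _ (hin i)⟩, rfl⟩
  · rintro ⟨m, ⟨U, hO, hcov, hin⟩, rfl⟩
    refine ⟨m, ⟨U, hO, hcov, fun i => relInessential_of_homotopy g f C A
      ⟨fun p => H (p.1, unitInterval.symm p.2), H.continuous.comp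
        (continuous_fst.prodMk (unitInterval.continuous_symm.comp continuous_snd))⟩
      (fun b => by simp [H1]) (fun b => by simp [H0])
      (fun c hc t => HC c hc _) _ (hin i)⟩, rfl⟩

end Paper
end

section
/- For maps of pairs f : (B,C) → (X,A) and g : (Y,D) → (B,C), the composite satisfies relcat(f ∘ g) ≤ min(relcat(f), relcat(g)). -/
open Set unitInterval

namespace Paper

/-- `relcat(f ∘ g) ≤ min(relcat f, relcat g)` for maps of pairs
`g : (Y, D) → (B, C)` and `f : (B, C) → (X, A)`. -/
theorem relcatMap_comp_le {Y B X : Type}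
    [TopologicalSpace Y] [TopologicalSpace B] [TopologicalSpace X]
    (f : C(B, X)) (g : C(Y, B)) (D : Set Y) (C : Set B) (A : Set X)
    (hg : Set.MapsTo g D C) (hf : Set.MapsTo f C A) :
    relcatMap (f.comp g) D A ≤ min (relcatMap f C A) (relcatMap g D C) := by
  apply le_min
  · apply sInf_le_sInf
    apply Set.image_mono
    rintro k ⟨U, hopen, hcov, hiness⟩
    refine ⟨fun i => g ⁻¹' U i, fun i => (hopen i).preimage g.continuous, ?_, ?_⟩
    · rw [← Set.preimage_iUnion, hcov, Set.preimage_univ]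
    · intro i
      obtain ⟨H, h1, h0, hC⟩ := hiness i
      refine ⟨⟨fun p => H (⟨g p.1, p.1.2⟩, p.2), ?_⟩, ?_, ?_, ?_⟩
      · exact H.continuous.comp
          (((g.continuous.comp (continuous_subtype_val.comp continuous_fst)).subtype_mk
            _).prodMk continuous_snd)
      · intro u; exact h1 ⟨g u, u.2⟩
      · intro u; exact h0 ⟨g u, u.2⟩
      · intro u hu t; exact hC ⟨g u, u.2⟩ (hg hu) t
  · apply sInf_le_sInf
    apply Set.image_mono
    rintro k ⟨U, hopen, hcov, hiness⟩
    refine ⟨U, hopen, hcov, ?_⟩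
    intro i
    obtain ⟨H, h1, h0, hC⟩ := hiness i
    refine ⟨f.comp H, ?_, ?_, ?_⟩
    · intro u; simp [h1 u]
    · intro u; exact hf (h0 u)
    · intro u hu t; exact hf (hC u hu t)


end Paper
end

section
/- TC_n(f) is a homotopy invariant: if f, g : X → Y are homotopic maps between path-connected spaces, then TC_n(f) = TC_n(g) for every n ≥ 2. -/
open Set unitInterval

namespace Paper

lemma relInessential_mono {B X : Type} [TopologicalSpace B] [TopologicalSpace X]
    (f₁ f₂ : C(B, X)) (C : Set B) (A : Set X)
    (G : ContinuousMap.Homotopy f₁ f₂) (hG : ∀ b ∈ C, ∀ t : I, G (t, b) ∈ A)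
    (U : Set B) (h : RelInessentialOn f₁ C A U) : RelInessentialOn f₂ C A U := by
  obtain ⟨H, h1, h0, hC⟩ := h
  let ι : C(U, B) := ⟨Subtype.val, continuous_subtype_val⟩
  let h₀ : C(U, X) := ⟨fun u => H (u, 0), H.continuous.comp (continuous_id.prodMk continuous_const)⟩
  let F : ContinuousMap.Homotopy h₀ (f₁.comp ι) :=
    { toFun := fun p => H (p.2, p.1)
      continuous_toFun := H.continuous.comp (continuous_snd.prodMk continuous_fst)
      map_zero_left := fun u => rfl
      map_one_left := fun u => h1 u }
  let G' : ContinuousMap.Homotopy (f₁.comp ι) (f₂.comp ι) :=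
    { toFun := fun p => G (p.1, ι p.2)
      continuous_toFun := G.continuous.comp (continuous_fst.prodMk (continuous_subtype_val.comp continuous_snd))
      map_zero_left := fun u => G.map_zero_left _
      map_one_left := fun u => G.map_one_left _ }
  let K := F.trans G'
  refine ⟨⟨fun p => K (p.2, p.1), K.continuous.comp (continuous_snd.prodMk continuous_fst)⟩, ?_, ?_, ?_⟩
  · intro u; exact K.apply_one u
  · intro u
    show K (0, u) ∈ A
    rw [K.apply_zero u]; exact h0 u
  · intro u hu t
    show K (t, u) ∈ A
    rw [ContinuousMap.Homotopy.trans_apply F G' (t, u)]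
    split_ifs with h
    · exact hC u hu _
    · exact hG u hu _

lemma relcatMap_congr {B X : Type} [TopologicalSpace B] [TopologicalSpace X]
    (f₁ f₂ : C(B, X)) (C : Set B) (A : Set X)
    (G : ContinuousMap.Homotopy f₁ f₂) (hG : ∀ b ∈ C, ∀ t : I, G (t, b) ∈ A) :
    relcatMap f₁ C A = relcatMap f₂ C A := by
  have hG' : ∀ b ∈ C, ∀ t : I, G.symm (t, b) ∈ A := by
    intro b hb t
    rw [ContinuousMap.Homotopy.symm_apply]
    exact hG b hb _
  have hset : {k : ℕ | ∃ U : Fin (k + 1) → Set B,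
      (∀ i, IsOpen (U i)) ∧ (⋃ i, U i) = Set.univ ∧ ∀ i, RelInessentialOn f₁ C A (U i)} =
      {k : ℕ | ∃ U : Fin (k + 1) → Set B,
      (∀ i, IsOpen (U i)) ∧ (⋃ i, U i) = Set.univ ∧ ∀ i, RelInessentialOn f₂ C A (U i)} := by
    ext k
    constructor <;> rintro ⟨U, hO, hc, hin⟩
    · exact ⟨U, hO, hc, fun i => relInessential_mono f₁ f₂ C A G hG _ (hin i)⟩
    · exact ⟨U, hO, hc, fun i => relInessential_mono f₂ f₁ C A G.symm hG' _ (hin i)⟩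
  unfold relcatMap
  rw [hset]

/-- `TCₙ` of a map is a homotopy invariant. -/
theorem higherTCmap_homotopy_invariant {X Y : Type} [TopologicalSpace X] [TopologicalSpace Y]
    [PathConnectedSpace X] [PathConnectedSpace Y]
    (n : ℕ) (hn : 2 ≤ n) (f g : C(X, Y)) (h : f.Homotopic g) :
    higherTCmap n f = higherTCmap n g := by
  obtain ⟨H⟩ := h
  let G : ContinuousMap.Homotopy (powMap n f) (powMap n g) :=
    { toFun := fun p i => H (p.1, p.2 i)
      continuous_toFun := continuous_pi fun i =>
        H.continuous.comp (continuous_fst.prodMk ((continuous_apply i).comp continuous_snd))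
      map_zero_left := fun x => funext fun i => H.apply_zero (x i)
      map_one_left := fun x => funext fun i => H.apply_one (x i) }
  refine relcatMap_congr _ _ _ _ G ?_
  intro x hx t i j
  show H (t, x i) = H (t, x j)
  rw [hx i j]

end Paper
end
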